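/- Let F be a free group with normal subgroup R and G = F/R. For any n ≥ 1 the quotient map F → G induces a surjection (F ∩ (1 + rf + f^n)) / (γ_2(R)·γ_n(F)) → D_n(G)/γ_n(G) whose kernel is (R ∩ (1 + rf + f^n)) / (γ_2(R)·(R ∩ γ_n(F))); that is, there is a natural short exact sequence of these three groups. -/

import Mathlib

/-- The augmentation homomorphism of the integral group ring `ℤ[G]`. -/
noncomputable def aug (G : Type*) [Group G] : MonoidAlgebra ℤ G →ₐ[ℤ] ℤ :=
  MonoidAlgebra.lift ℤ ℤ G 1

/-- The augmentation ideal of `ℤ[G]`, viewed as a `ℤ`-submodule of `ℤ[G]`. -/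
noncomputable def augIdeal (G : Type*) [Group G] : Submodule ℤ (MonoidAlgebra ℤ G) :=
  (RingHom.ker (aug G).toRingHom).restrictScalars ℤ

/-- The relation ideal `r = (R - 1)·ℤ[G]` associated to a subgroup `R ≤ G`. -/
noncomputable def relIdeal (G : Type*) [Group G] (R : Subgroup G) :
    Submodule ℤ (MonoidAlgebra ℤ G) :=
  Submodule.span ℤ {x | ∃ ρ ∈ R, ∃ a : MonoidAlgebra ℤ G,
    x = (MonoidAlgebra.of ℤ G ρ - 1) * a}


open MonoidAlgebra Submodule

section General
variable {G : Type*} [Group G]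

lemma aug_of (g : G) : aug G (of ℤ G g) = 1 := by
  simp [aug, MonoidAlgebra.lift_single]

lemma mem_augIdeal_iff {x : MonoidAlgebra ℤ G} : x ∈ augIdeal G ↔ aug G x = 0 := Iff.rfl

lemma of_sub_one_mem_augIdeal (g : G) : of ℤ G g - 1 ∈ augIdeal G := by
  rw [mem_augIdeal_iff, map_sub, map_one, aug_of, sub_self]

lemma augIdeal_eq_span :
    augIdeal G = span ℤ (Set.range fun g : G => of ℤ G g - 1) := by
  apply le_antisymm
  · intro x hx
    set S := span ℤ (Set.range fun g : G => of ℤ G g - 1) with hS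
    let L : MonoidAlgebra ℤ G →ₗ[ℤ] MonoidAlgebra ℤ G :=
      LinearMap.id - ((aug G).toLinearMap.smulRight (1 : MonoidAlgebra ℤ G))
    have hL : ∀ x : MonoidAlgebra ℤ G, L x = x - aug G x • 1 := fun x => rfl
    have key : ∀ x : MonoidAlgebra ℤ G, L x ∈ S := by
      intro x
      induction x using MonoidAlgebra.induction_linear with
      | zero => rw [map_zero]; exact zero_mem S
      | add a b ha hb => rw [map_add]; exact add_mem ha hb
      | single g a =>
        have h1 : (MonoidAlgebra.single g a : MonoidAlgebra ℤ G) = a • of ℤ G g := by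
          simp [MonoidAlgebra.of_apply, MonoidAlgebra.smul_single]
        rw [h1, map_smul]
        refine smul_mem _ _ ?_
        rw [hL, aug_of, one_smul]
        exact subset_span ⟨g, rfl⟩
    have hx0 : aug G x = 0 := hx
    have := key x
    rwa [hL, hx0, zero_smul, sub_zero] at this
  · rw [span_le]
    rintro _ ⟨g, rfl⟩
    exact of_sub_one_mem_augIdeal g

/-- right-ideal property -/
def RtId (W : Submodule ℤ (MonoidAlgebra ℤ G)) : Prop :=
  ∀ x ∈ W, ∀ y : MonoidAlgebra ℤ G, x * y ∈ W

lemma rtId_augIdeal : RtId (augIdeal G) := by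
  intro x hx y
  have : aug G (x * y) = aug G x * aug G y := map_mul _ _ _
  simp only [mem_augIdeal_iff] at hx ⊢
  rw [this, hx, zero_mul]

lemma rtId_mul (U W : Submodule ℤ (MonoidAlgebra ℤ G)) (hW : RtId W) : RtId (U * W) := by
  intro x hx y
  induction hx using Submodule.mul_induction_on' with
  | mem_mul_mem u hu w hw =>
    rw [mul_assoc]; exact mul_mem_mul hu (hW w hw y)
  | add a ha b hb ha' hb' => rw [add_mul]; exact add_mem ha' hb'

lemma rtId_pow (W : Submodule ℤ (MonoidAlgebra ℤ G)) (hW : RtId W) (n : ℕ) (hn : 1 ≤ n) :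
    RtId (W ^ n) := by
  cases n with
  | zero => exact absurd hn (by omega)
  | succ m => rw [pow_succ]; exact rtId_mul _ _ hW

lemma rtId_sup {U W : Submodule ℤ (MonoidAlgebra ℤ G)} (hU : RtId U) (hW : RtId W) :
    RtId (U ⊔ W) := by
  intro x hx y
  rw [Submodule.mem_sup] at hx ⊢
  obtain ⟨u, hu, w, hw, rfl⟩ := hx
  exact ⟨u * y, hU u hu y, w * y, hW w hw y, (add_mul u w y).symm⟩

lemma rtId_relIdeal (R : Subgroup G) : RtId (relIdeal G R) := by
  intro x hx y
  induction hx using Submodule.span_induction with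
  | mem z hz =>
    obtain ⟨ρ, hρ, a, rfl⟩ := hz
    rw [mul_assoc]
    exact subset_span ⟨ρ, hρ, a * y, rfl⟩
  | zero => simpa using zero_mem _
  | add a b _ _ ha hb => rw [add_mul]; exact add_mem ha hb
  | smul z a _ ha => rw [smul_mul_assoc]; exact smul_mem _ _ ha

/-- the subgroup `{g | g - 1 ∈ W}` for a right ideal `W`. -/
def idealSubgroup (W : Submodule ℤ (MonoidAlgebra ℤ G)) (hW : RtId W) : Subgroup G where
  carrier := {g | of ℤ G g - 1 ∈ W}
  one_mem' := by
    show of ℤ G 1 - 1 ∈ W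
    rw [map_one, sub_self]; exact zero_mem W
  mul_mem' := by
    intro a b ha hb
    show of ℤ G (a * b) - 1 ∈ W
    have key : of ℤ G (a * b) - 1 = (of ℤ G a - 1) * of ℤ G b + (of ℤ G b - 1) := by
      rw [map_mul, sub_mul, one_mul]; abel
    rw [key]
    exact add_mem (hW _ ha _) hb
  inv_mem' := by
    intro a ha
    show of ℤ G a⁻¹ - 1 ∈ W
    have key : of ℤ G a⁻¹ - 1 = -((of ℤ G a - 1) * of ℤ G a⁻¹) := by
      have h : of ℤ G a * of ℤ G a⁻¹ = 1 := by rw [← map_mul, mul_inv_cancel, map_one]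
      rw [sub_mul, h, one_mul, neg_sub]
    rw [key]
    exact neg_mem (hW _ ha _)

lemma mem_idealSubgroup {W : Submodule ℤ (MonoidAlgebra ℤ G)} {hW : RtId W} {g : G} :
    g ∈ idealSubgroup W hW ↔ of ℤ G g - 1 ∈ W := Iff.rfl

end General

section General2
variable {G : Type*} [Group G]

/-- stability under left multiplication by group elements -/
def LtG (W : Submodule ℤ (MonoidAlgebra ℤ G)) : Prop :=
  ∀ g : G, ∀ x ∈ W, of ℤ G g * x ∈ W

lemma ltG_augIdeal : LtG (augIdeal G) := by
  intro g x hx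
  rw [mem_augIdeal_iff] at hx ⊢
  rw [map_mul, hx, mul_zero]

lemma ltG_mul {U W : Submodule ℤ (MonoidAlgebra ℤ G)} (hU : LtG U) : LtG (U * W) := by
  intro g x hx
  induction hx using Submodule.mul_induction_on' with
  | mem_mul_mem u hu w hw => rw [← mul_assoc]; exact mul_mem_mul (hU g u hu) hw
  | add a ha b hb ha' hb' => rw [mul_add]; exact add_mem ha' hb'

lemma ltG_pow_augIdeal (n : ℕ) (hn : 1 ≤ n) : LtG (augIdeal G ^ n) := by
  cases n with
  | zero => exact absurd hn (by omega)
  | succ m => rw [pow_succ']; exact ltG_mul ltG_augIdeal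

lemma ltG_relIdeal (R : Subgroup G) [R.Normal] : LtG (relIdeal G R) := by
  intro g x hx
  induction hx using Submodule.span_induction with
  | mem z hz =>
    obtain ⟨ρ, hρ, a, rfl⟩ := hz
    have h : of ℤ G g * (of ℤ G ρ - 1) = (of ℤ G (g * ρ * g⁻¹) - 1) * of ℤ G g := by
      rw [mul_sub, sub_mul, mul_one, one_mul, ← map_mul, ← map_mul]
      congr 2
      group
    rw [← mul_assoc, h, mul_assoc]
    exact subset_span ⟨g * ρ * g⁻¹, ‹R.Normal›.conj_mem ρ hρ g, of ℤ G g * a, rfl⟩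
  | zero => rw [mul_zero]; exact zero_mem _
  | add a b _ _ ha hb => rw [mul_add]; exact add_mem ha hb
  | smul z a _ ha => rw [mul_smul_comm]; exact smul_mem _ _ ha

lemma ltG_sup {U W : Submodule ℤ (MonoidAlgebra ℤ G)} (hU : LtG U) (hW : LtG W) :
    LtG (U ⊔ W) := by
  intro g x hx
  rw [Submodule.mem_sup] at hx ⊢
  obtain ⟨u, hu, w, hw, rfl⟩ := hx
  exact ⟨_, hU g u hu, _, hW g w hw, (mul_add _ u w).symm⟩

open scoped commutatorElement in
/-- `γ_{m+1}(G) ⊆ 1 + f^{m+1}` (mathlib indexing: `lowerCentralSeries G m`). -/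
lemma lcs_sub_one_mem (m : ℕ) :
    ∀ c ∈ Subgroup.lowerCentralSeries (⊤ : Subgroup G) m, of ℤ G c - 1 ∈ augIdeal G ^ (m + 1) := by
  induction m with
  | zero => intro c _; rw [pow_one]; exact of_sub_one_mem_augIdeal c
  | succ k ih =>
    have h : Subgroup.lowerCentralSeries (⊤ : Subgroup G) (k + 1)
        ≤ idealSubgroup (augIdeal G ^ (k + 2)) (rtId_pow _ rtId_augIdeal _ (by omega)) := by
      show ⁅Subgroup.lowerCentralSeries (⊤ : Subgroup G) k, (⊤ : Subgroup G)⁆ ≤ _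
      rw [Subgroup.commutator_le]
      intro x hx y _
      rw [mem_idealSubgroup]
      have hx1 : of ℤ G x - 1 ∈ augIdeal G ^ (k + 1) := ih x hx
      have hy1 : of ℤ G y - 1 ∈ augIdeal G := of_sub_one_mem_augIdeal y
      have hA : of ℤ G (x * y) - of ℤ G (y * x) ∈ augIdeal G ^ (k + 2) := by
        have e : of ℤ G (x * y) - of ℤ G (y * x)
            = (of ℤ G x - 1) * (of ℤ G y - 1) - (of ℤ G y - 1) * (of ℤ G x - 1) := by
          rw [map_mul, map_mul]; noncomm_ring
        rw [e]
        refine sub_mem ?_ ?_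
        · rw [show k + 2 = (k + 1) + 1 from rfl, pow_succ]
          exact Submodule.mul_mem_mul hx1 hy1
        · rw [show k + 2 = (k + 1) + 1 from rfl, pow_succ']
          exact Submodule.mul_mem_mul hy1 hx1
      have key : of ℤ G ⁅x, y⁆ - 1
          = (of ℤ G (x * y) - of ℤ G (y * x)) * of ℤ G ((y * x)⁻¹) := by
        have h1 : of ℤ G (y * x) * of ℤ G ((y * x)⁻¹) = 1 := by
          rw [← map_mul, mul_inv_cancel, map_one]
        have h2 : of ℤ G (x * y) * of ℤ G ((y * x)⁻¹) = of ℤ G ⁅x, y⁆ := by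
          rw [← map_mul]
          congr 1
          group
        rw [sub_mul, h1, h2]
      rw [key]
      exact rtId_pow _ rtId_augIdeal _ (by omega) _ hA _
    exact fun c hc => h hc

lemma lcs_map_eq {H : Type*} [Group H] (f : G →* H) (hf : Function.Surjective f) (m : ℕ) :
    Subgroup.map f (Subgroup.lowerCentralSeries (⊤ : Subgroup G) m) = Subgroup.lowerCentralSeries (⊤ : Subgroup H) m := by
  induction m with
  | zero => exact Subgroup.map_top_of_surjective f hf
  | succ k ih =>
    show Subgroup.map f ⁅Subgroup.lowerCentralSeries (⊤ : Subgroup G) k, ⊤⁆ = ⁅Subgroup.lowerCentralSeries (⊤ : Subgroup H) k, ⊤⁆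
    rw [Subgroup.map_commutator, ih, Subgroup.map_top_of_surjective f hf]

end General2

section Quot
variable {F G : Type*} [Group F] [Group G] (q : F →* G)

/-- the induced algebra map on group rings -/
noncomputable def qAlg : MonoidAlgebra ℤ F →ₐ[ℤ] MonoidAlgebra ℤ G :=
  MonoidAlgebra.mapDomainAlgHom ℤ ℤ q

lemma qAlg_apply (x : MonoidAlgebra ℤ F) : qAlg q x = MonoidAlgebra.mapDomain q x := rfl

lemma qAlg_of (w : F) : qAlg q (of ℤ F w) = of ℤ G (q w) := by
  rw [qAlg_apply]
  exact MonoidAlgebra.mapDomain_single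

lemma map_augIdeal (hq : Function.Surjective q) :
    Submodule.map (qAlg q).toLinearMap (augIdeal F) = augIdeal G := by
  rw [augIdeal_eq_span, augIdeal_eq_span, Submodule.map_span]
  congr 1
  ext z
  constructor
  · rintro ⟨_, ⟨w, rfl⟩, rfl⟩
    exact ⟨q w, by simp only [AlgHom.toLinearMap_apply, map_sub, map_one, qAlg_of]⟩
  · rintro ⟨g, rfl⟩
    obtain ⟨w, rfl⟩ := hq g
    exact ⟨of ℤ F w - 1, ⟨w, rfl⟩,
      by simp only [AlgHom.toLinearMap_apply, map_sub, map_one, qAlg_of]⟩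

lemma map_augIdeal_pow (hq : Function.Surjective q) (n : ℕ) :
    Submodule.map (qAlg q).toLinearMap (augIdeal F ^ n) = augIdeal G ^ n := by
  rw [Submodule.map_pow, map_augIdeal q hq]

lemma map_relIdeal_eq_bot (R : Subgroup F) (hR : R ≤ q.ker) :
    Submodule.map (qAlg q).toLinearMap (relIdeal F R) = ⊥ := by
  rw [relIdeal, Submodule.map_span, Submodule.span_eq_bot]
  rintro _ ⟨_, ⟨ρ, hρ, a, rfl⟩, rfl⟩
  simp only [AlgHom.toLinearMap_apply, map_mul, map_sub, map_one, qAlg_of]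
  have : q ρ = 1 := hR hρ
  rw [this, map_one, sub_self, zero_mul]

lemma of_sub_of_mem_relIdeal (R : Subgroup F) [R.Normal] {w u : F} (h : u⁻¹ * w ∈ R) :
    of ℤ F w - of ℤ F u ∈ relIdeal F R := by
  have e : of ℤ F w - of ℤ F u = of ℤ F u * (of ℤ F (u⁻¹ * w) - 1) := by
    rw [mul_sub, mul_one, ← map_mul, mul_inv_cancel_left]
  rw [e]
  refine ltG_relIdeal R u _ ?_
  have : of ℤ F (u⁻¹ * w) - 1 = (of ℤ F (u⁻¹ * w) - 1) * 1 := by rw [mul_one]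
  rw [this]
  exact Submodule.subset_span ⟨u⁻¹ * w, h, 1, rfl⟩

lemma ker_qAlg_le_relIdeal (hq : Function.Surjective q) (R : Subgroup F) [R.Normal]
    (hR : ∀ w, q w = 1 → w ∈ R)
    {x : MonoidAlgebra ℤ F} (hx : qAlg q x = 0) : x ∈ relIdeal F R := by
  classical
  choose s hs using hq
  let M : MonoidAlgebra ℤ F →ₗ[ℤ] MonoidAlgebra ℤ F :=
    MonoidAlgebra.mapDomainLinearMap ℤ ℤ (fun w => s (q w))
  let L : MonoidAlgebra ℤ F →ₗ[ℤ] MonoidAlgebra ℤ F := LinearMap.id - M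
  have key : ∀ y : MonoidAlgebra ℤ F, L y ∈ relIdeal F R := by
    intro y
    induction y using MonoidAlgebra.induction_linear with
    | zero => rw [map_zero]; exact zero_mem _
    | add a b ha hb => rw [map_add]; exact add_mem ha hb
    | single w a =>
      have e1 : (MonoidAlgebra.single w a : MonoidAlgebra ℤ F) = a • of ℤ F w := by
        simp [MonoidAlgebra.of_apply, MonoidAlgebra.smul_single]
      have hM : M (of ℤ F w) = of ℤ F (s (q w)) := by
        show MonoidAlgebra.mapDomain (fun w => s (q w)) (MonoidAlgebra.single w 1) = _
        rw [MonoidAlgebra.mapDomain_single]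
        rfl
      have hLof : L (of ℤ F w) = of ℤ F w - of ℤ F (s (q w)) := by
        have h0 : L (of ℤ F w) = of ℤ F w - M (of ℤ F w) := rfl
        rw [h0, hM]
      rw [e1, map_smul, hLof]
      refine Submodule.smul_mem _ _ (of_sub_of_mem_relIdeal R ?_)
      apply hR
      rw [map_mul, map_inv, hs (q w)]
      exact inv_mul_cancel _
  have h2 : M x = 0 := by
    show MonoidAlgebra.mapDomain (fun w => s (q w)) x = 0
    have hc : (fun w => s (q w)) = s ∘ q := rfl
    rw [hc, show MonoidAlgebra.mapDomain (s ∘ q) x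
      = MonoidAlgebra.mapDomain s (MonoidAlgebra.mapDomain q x) by ext; simp [Finsupp.mapDomain_comp]]
    rw [qAlg_apply] at hx
    rw [hx, MonoidAlgebra.mapDomain_zero]
  have h3 := key x
  have h4 : L x = x - M x := rfl
  rwa [h4, h2, sub_zero] at h3

end Quot

section Espan
variable {G : Type*} [Group G] (R : Subgroup G) [R.Normal]

lemma of_sub_one_mem_relIdeal {ρ : G} (hρ : ρ ∈ R) : of ℤ G ρ - 1 ∈ relIdeal G R := by
  have : of ℤ G ρ - 1 = (of ℤ G ρ - 1) * 1 := by rw [mul_one]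
  rw [this]
  exact Submodule.subset_span ⟨ρ, hρ, 1, rfl⟩

lemma prod_mem_rf {ρ σ : G} (hρ : ρ ∈ R) :
    (of ℤ G ρ - 1) * (of ℤ G σ - 1) ∈ relIdeal G R * augIdeal G :=
  Submodule.mul_mem_mul (of_sub_one_mem_relIdeal R hρ) (of_sub_one_mem_augIdeal σ)

lemma relIdeal_le_espan_sup :
    relIdeal G R ≤ Submodule.span ℤ {x | ∃ ρ ∈ R, x = of ℤ G ρ - 1}
      ⊔ relIdeal G R * augIdeal G := by
  rw [relIdeal, Submodule.span_le]
  rintro _ ⟨ρ, hρ, a, rfl⟩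
  have hsplit : (of ℤ G ρ - 1) * a
      = aug G a • (of ℤ G ρ - 1) + (of ℤ G ρ - 1) * (a - aug G a • 1) := by
    rw [mul_sub, mul_smul_comm, mul_one]; abel
  rw [hsplit]
  refine add_mem (Submodule.mem_sup_left ?_) (Submodule.mem_sup_right ?_)
  · exact Submodule.smul_mem _ _ (Submodule.subset_span ⟨ρ, hρ, rfl⟩)
  · refine Submodule.mul_mem_mul (of_sub_one_mem_relIdeal R hρ) ?_
    rw [mem_augIdeal_iff, map_sub, map_smul, map_one, smul_eq_mul, mul_one, sub_self]

lemma zsmul_approx (ρ : G) (hρ : ρ ∈ R) (z : ℤ) :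
    z • (of ℤ G ρ - 1) - (of ℤ G (ρ ^ z) - 1) ∈ relIdeal G R * augIdeal G := by
  induction z using Int.induction_on with
  | zero => rw [zpow_zero, map_one]; simp
  | succ k ih =>
    have h1 : of ℤ G (ρ ^ ((k : ℤ) + 1)) = of ℤ G (ρ ^ (k : ℤ)) * of ℤ G ρ := by
      rw [← map_mul, ← zpow_add_one]
    have key : ((k : ℤ) + 1) • (of ℤ G ρ - 1) - (of ℤ G (ρ ^ ((k : ℤ) + 1)) - 1)
        = ((k : ℤ) • (of ℤ G ρ - 1) - (of ℤ G (ρ ^ (k : ℤ)) - 1))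
          - (of ℤ G (ρ ^ (k : ℤ)) - 1) * (of ℤ G ρ - 1) := by
      rw [h1, add_smul, one_smul]; noncomm_ring
    rw [key]
    exact sub_mem ih (prod_mem_rf R (zpow_mem hρ _))
  | pred k ih =>
    have h1 : of ℤ G (ρ ^ (-(k : ℤ) - 1)) = of ℤ G (ρ ^ (-(k : ℤ))) * of ℤ G ρ⁻¹ := by
      rw [← map_mul, ← zpow_neg_one, ← zpow_add, sub_eq_add_neg]
    have h2 : of ℤ G ρ * of ℤ G ρ⁻¹ = 1 := by rw [← map_mul, mul_inv_cancel, map_one]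
    have key : (-(k : ℤ) - 1) • (of ℤ G ρ - 1) - (of ℤ G (ρ ^ (-(k : ℤ) - 1)) - 1)
        = ((-(k : ℤ)) • (of ℤ G ρ - 1) - (of ℤ G (ρ ^ (-(k : ℤ))) - 1))
          - (of ℤ G (ρ ^ (-(k : ℤ))) - 1) * (of ℤ G ρ⁻¹ - 1)
          + (of ℤ G ρ - 1) * (of ℤ G ρ⁻¹ - 1) := by
      have expand : (of ℤ G ρ - 1) * (of ℤ G ρ⁻¹ - 1)
          = of ℤ G ρ * of ℤ G ρ⁻¹ - of ℤ G ρ - of ℤ G ρ⁻¹ + 1 := by noncomm_ring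
      rw [h2] at expand
      rw [h1, sub_smul, one_smul, expand]
      noncomm_ring
    rw [key]
    exact add_mem (sub_mem ih (prod_mem_rf R (zpow_mem hρ _))) (prod_mem_rf R hρ)

lemma espan_approx {e : MonoidAlgebra ℤ G}
    (he : e ∈ Submodule.span ℤ {x | ∃ ρ ∈ R, x = of ℤ G ρ - 1}) :
    ∃ ρ ∈ R, e - (of ℤ G ρ - 1) ∈ relIdeal G R * augIdeal G := by
  induction he using Submodule.span_induction with
  | mem x hx =>
    obtain ⟨ρ, hρ, rfl⟩ := hx
    exact ⟨ρ, hρ, by rw [sub_self]; exact zero_mem _⟩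
  | zero => exact ⟨1, one_mem R, by rw [map_one, sub_self, sub_zero]; exact zero_mem _⟩
  | add a b _ _ ha hb =>
    obtain ⟨ρ₁, h1, hm1⟩ := ha
    obtain ⟨ρ₂, h2, hm2⟩ := hb
    refine ⟨ρ₁ * ρ₂, mul_mem h1 h2, ?_⟩
    have hmul : of ℤ G (ρ₁ * ρ₂) - 1
        = (of ℤ G ρ₁ - 1) * (of ℤ G ρ₂ - 1) + (of ℤ G ρ₁ - 1) + (of ℤ G ρ₂ - 1) := by
      rw [map_mul]; noncomm_ring
    have key : a + b - (of ℤ G (ρ₁ * ρ₂) - 1)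
        = (a - (of ℤ G ρ₁ - 1)) + (b - (of ℤ G ρ₂ - 1))
          - (of ℤ G ρ₁ - 1) * (of ℤ G ρ₂ - 1) := by
      rw [hmul]; abel
    rw [key]
    exact sub_mem (add_mem hm1 hm2) (prod_mem_rf R h1)
  | smul z a _ ha =>
    obtain ⟨ρ, h1, hm⟩ := ha
    refine ⟨ρ ^ z, zpow_mem h1 z, ?_⟩
    have key : z • a - (of ℤ G (ρ ^ z) - 1)
        = z • (a - (of ℤ G ρ - 1))
          + (z • (of ℤ G ρ - 1) - (of ℤ G (ρ ^ z) - 1)) := by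
      rw [smul_sub]; abel
    rw [key]
    exact add_mem (Submodule.smul_mem _ _ hm) (zsmul_approx R ρ h1 z)

end Espan

/-- For `G = F/R` and `n ≥ 1`, the quotient map `F → G` induces a surjection
`(F ∩ (1 + rf + f^n))/(γ_2(R)γ_n(F)) ↠ D_n(G)/γ_n(G)` with kernel
`(R ∩ (1 + rf + f^n))/(γ_2(R)(R ∩ γ_n(F)))`.  The source is realized as the image of
`V = F ∩ (1 + rf + f^n)` in `F/(γ_2(R)γ_n(F))`, the target as the image of `D_n(G)` in
`G/γ_n(G)`, and the kernel as the image of `R ⊓ V` in `F/(γ_2(R)γ_n(F))`. -/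
theorem dimensionQuotient_ses (α : Type*) (R : Subgroup (FreeGroup α)) [R.Normal]
    (n : ℕ) (hn : 1 ≤ n) :
    ∃ D : Subgroup (FreeGroup α ⧸ R),
      (∀ x : FreeGroup α ⧸ R, x ∈ D ↔
          MonoidAlgebra.of ℤ (FreeGroup α ⧸ R) x - 1 ∈ augIdeal (FreeGroup α ⧸ R) ^ n) ∧
      ∃ V : Subgroup (FreeGroup α),
        (∀ w : FreeGroup α, w ∈ V ↔
            MonoidAlgebra.of ℤ (FreeGroup α) w - 1 ∈
              relIdeal (FreeGroup α) R * augIdeal (FreeGroup α)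
                ⊔ augIdeal (FreeGroup α) ^ n) ∧
        ∃ φ : Subgroup.map
                (QuotientGroup.mk' (⁅R, R⁆ ⊔ Subgroup.lowerCentralSeries (⊤ : Subgroup (FreeGroup α)) (n - 1))) V →*
              (FreeGroup α ⧸ R) ⧸ Subgroup.lowerCentralSeries (⊤ : Subgroup (FreeGroup α ⧸ R)) (n - 1),
          (∀ (w : FreeGroup α) (hw : w ∈ V),
              φ ⟨QuotientGroup.mk' (⁅R, R⁆ ⊔ Subgroup.lowerCentralSeries (⊤ : Subgroup (FreeGroup α)) (n - 1)) w,
                  Subgroup.mem_map_of_mem _ hw⟩ =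
                QuotientGroup.mk' (Subgroup.lowerCentralSeries (⊤ : Subgroup (FreeGroup α ⧸ R)) (n - 1))
                  (QuotientGroup.mk' R w)) ∧
          φ.range = Subgroup.map
              (QuotientGroup.mk' (Subgroup.lowerCentralSeries (⊤ : Subgroup (FreeGroup α ⧸ R)) (n - 1))) D ∧
          φ.ker = (Subgroup.map
              (QuotientGroup.mk' (⁅R, R⁆ ⊔ Subgroup.lowerCentralSeries (⊤ : Subgroup (FreeGroup α)) (n - 1)))
              (R ⊓ V)).subgroupOf
            (Subgroup.map
              (QuotientGroup.mk' (⁅R, R⁆ ⊔ Subgroup.lowerCentralSeries (⊤ : Subgroup (FreeGroup α)) (n - 1))) V) := by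
  classical
  set F := FreeGroup α with hF
  set G := FreeGroup α ⧸ R with hG
  let q : F →* G := QuotientGroup.mk' R
  have hq : Function.Surjective q := QuotientGroup.mk'_surjective R
  -- the ideals
  set W : Submodule ℤ (MonoidAlgebra ℤ F) :=
    relIdeal F R * augIdeal F ⊔ augIdeal F ^ n with hW
  have hWrt : RtId W :=
    rtId_sup (rtId_mul _ _ rtId_augIdeal) (rtId_pow _ rtId_augIdeal n hn)
  have hWlt : LtG W :=
    ltG_sup (ltG_mul (ltG_relIdeal R)) (ltG_pow_augIdeal n hn)
  have hDrt : RtId (augIdeal G ^ n) := rtId_pow _ rtId_augIdeal n hn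
  -- the subgroups
  set D : Subgroup G := idealSubgroup (augIdeal G ^ n) hDrt with hD
  set V : Subgroup F := idealSubgroup W hWrt with hV
  set N : Subgroup F := ⁅R, R⁆ ⊔ Subgroup.lowerCentralSeries (⊤ : Subgroup F) (n - 1) with hN
  set γ : Subgroup G := Subgroup.lowerCentralSeries (⊤ : Subgroup G) (n - 1) with hγ
  -- the induced map on quotients
  have hker : N ≤ ((QuotientGroup.mk' γ).comp q).ker := by
    rw [hN]
    refine sup_le ?_ ?_
    · have h1 : ⁅R, R⁆ ≤ R := Subgroup.commutator_le_left R R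
      intro x hx
      rw [MonoidHom.mem_ker, MonoidHom.comp_apply]
      have : q x = 1 := by
        rw [← MonoidHom.mem_ker, QuotientGroup.ker_mk']
        exact h1 hx
      rw [this, map_one]
    · intro x hx
      rw [MonoidHom.mem_ker, MonoidHom.comp_apply]
      have h2 : q x ∈ γ := by
        rw [hγ]
        exact Subgroup.lowerCentralSeries.map q (n - 1) ⟨x, hx, rfl⟩
      exact (QuotientGroup.eq_one_iff (q x)).mpr h2
  let ψ : F ⧸ N →* G ⧸ γ := QuotientGroup.lift N ((QuotientGroup.mk' γ).comp q) hker
  let φ : Subgroup.map (QuotientGroup.mk' N) V →* G ⧸ γ :=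
    ψ.comp (Subgroup.map (QuotientGroup.mk' N) V).subtype
  have hφval : ∀ (x : F) (hx : (QuotientGroup.mk' N) x ∈ Subgroup.map (QuotientGroup.mk' N) V),
      φ ⟨(QuotientGroup.mk' N) x, hx⟩ = QuotientGroup.mk' γ (q x) := fun x hx => rfl
  -- image of the big ideal
  have hπ : Submodule.map (qAlg q).toLinearMap W ≤ augIdeal G ^ n := by
    rw [hW, Submodule.map_sup, Submodule.map_mul,
      map_relIdeal_eq_bot q R (le_of_eq (QuotientGroup.ker_mk' R).symm),
      map_augIdeal_pow q hq n, bot_mul]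
    exact sup_le bot_le le_rfl
  have hVD : ∀ w ∈ V, q w ∈ D := by
    intro w hw
    have hw1 : of ℤ F w - 1 ∈ W := hw
    have h2 := Submodule.mem_map_of_mem (f := (qAlg q).toLinearMap) hw1
    have h3 : (qAlg q).toLinearMap (of ℤ F w - 1) = of ℤ G (q w) - 1 := by
      simp only [AlgHom.toLinearMap_apply, map_sub, map_one, qAlg_of]
    rw [h3] at h2
    exact hπ h2
  refine ⟨D, fun x => Iff.rfl, V, fun w => Iff.rfl, φ, fun w hw => hφval w _, ?_, ?_⟩
  · -- range
    ext z
    constructor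
    · rintro ⟨⟨x, hx⟩, rfl⟩
      obtain ⟨w, hw, hwx⟩ := hx
      subst hwx
      exact ⟨q w, hVD w hw, (hφval w _).symm⟩
    · rintro ⟨d, hd, rfl⟩
      obtain ⟨w₀, hw₀⟩ := hq d
      have hd1 : of ℤ G d - 1 ∈ augIdeal G ^ n := hd
      rw [← map_augIdeal_pow q hq n] at hd1
      obtain ⟨u, hu, hu2⟩ := hd1
      have hx0 : qAlg q (of ℤ F w₀ - 1 - u) = 0 := by
        rw [AlgHom.toLinearMap_apply] at hu2
        rw [map_sub, map_sub, map_one, qAlg_of, hw₀, hu2, sub_self]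
      have hxrel : of ℤ F w₀ - 1 - u ∈ relIdeal F R :=
        ker_qAlg_le_relIdeal q hq R
          (fun w h => by rwa [← QuotientGroup.ker_mk' R, MonoidHom.mem_ker]) hx0
      have hxsup := relIdeal_le_espan_sup R hxrel
      rw [Submodule.mem_sup] at hxsup
      obtain ⟨e, he, v, hv, hev⟩ := hxsup
      obtain ⟨ρ, hρ, happrox⟩ := espan_approx R he
      have hw1 : of ℤ F w₀ - 1 = e + v + u := by rw [hev]; abel
      have hkey : of ℤ F w₀ - 1 - (of ℤ F ρ - 1) ∈ W := by
        have e3 : of ℤ F w₀ - 1 - (of ℤ F ρ - 1)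
            = (e - (of ℤ F ρ - 1)) + v + u := by rw [hw1]; abel
        rw [e3]
        exact add_mem (add_mem ((le_sup_left : relIdeal F R * augIdeal F ≤ W) happrox)
          ((le_sup_left : relIdeal F R * augIdeal F ≤ W) hv))
          ((le_sup_right : augIdeal F ^ n ≤ W) hu)
      have hVw : ρ⁻¹ * w₀ ∈ V := by
        show of ℤ F (ρ⁻¹ * w₀) - 1 ∈ W
        have e1 : of ℤ F (ρ⁻¹ * w₀) - 1
            = of ℤ F ρ⁻¹ * (of ℤ F w₀ - 1 - (of ℤ F ρ - 1)) := by
          rw [sub_sub_sub_cancel_right, mul_sub, ← map_mul, ← map_mul, inv_mul_cancel, map_one]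
        rw [e1]
        exact hWlt ρ⁻¹ _ hkey
      have hqρ : q ρ = 1 := by
        rw [← MonoidHom.mem_ker]
        have hkq : q.ker = R := QuotientGroup.ker_mk' R
        rw [hkq]
        exact hρ
      have hqw : q (ρ⁻¹ * w₀) = d := by
        rw [map_mul, map_inv, hqρ, hw₀, inv_one, one_mul]
      exact ⟨⟨QuotientGroup.mk' N (ρ⁻¹ * w₀), Subgroup.mem_map_of_mem _ hVw⟩,
        by rw [hφval (ρ⁻¹ * w₀) _, hqw]⟩
  · -- kernel
    have hkq : q.ker = R := QuotientGroup.ker_mk' R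
    ext ⟨x, hx⟩
    simp only [MonoidHom.mem_ker, Subgroup.mem_subgroupOf]
    have hx' := hx
    obtain ⟨w, hw, hwx⟩ := hx'
    subst hwx
    rw [hφval w hx]
    constructor
    · intro h1
      have h2 : q w ∈ γ := (QuotientGroup.eq_one_iff (q w)).mp h1
      rw [hγ, ← lcs_map_eq q hq (n - 1)] at h2
      have h4 : w ∈ Subgroup.lowerCentralSeries (⊤ : Subgroup F) (n - 1) ⊔ R := by
        have h3 : w ∈ Subgroup.comap q (Subgroup.map q (Subgroup.lowerCentralSeries (⊤ : Subgroup F) (n - 1))) :=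
          Subgroup.mem_comap.mpr h2
        rwa [Subgroup.comap_map_eq, hkq] at h3
      rw [sup_comm] at h4
      have h6 : w ∈ (↑(R ⊔ Subgroup.lowerCentralSeries (⊤ : Subgroup F) (n - 1)) : Set F) := h4
      rw [Subgroup.mul_normal] at h6
      obtain ⟨r₀, hr₀, c, hc, hrc⟩ := h6
      have hcV : of ℤ F c⁻¹ - 1 ∈ augIdeal F ^ n := by
        have := lcs_sub_one_mem (n - 1) c⁻¹ (inv_mem hc)
        rwa [Nat.sub_add_cancel hn] at this
      have hr₀V : r₀ ∈ V := by
        show of ℤ F r₀ - 1 ∈ W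
        have hr0 : r₀ = w * c⁻¹ := by rw [← hrc]; beta_reduce; exact (mul_inv_cancel_right r₀ c).symm
        have e2 : of ℤ F (w * c⁻¹) - 1
            = (of ℤ F w - 1) * of ℤ F c⁻¹ + (of ℤ F c⁻¹ - 1) := by
          rw [map_mul, sub_mul, one_mul]; abel
        rw [hr0, e2]
        have hwW : of ℤ F w - 1 ∈ W := hw
        exact add_mem (hWrt _ hwW _) ((le_sup_right : augIdeal F ^ n ≤ W) hcV)
      refine ⟨r₀, ⟨hr₀, hr₀V⟩, ?_⟩
      have hcN : c ∈ N := by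
        rw [hN]
        exact (le_sup_right :
          Subgroup.lowerCentralSeries (⊤ : Subgroup F) (n - 1) ≤ ⁅R, R⁆ ⊔ Subgroup.lowerCentralSeries (⊤ : Subgroup F) (n - 1)) hc
      rw [← hrc, map_mul]
      have : (QuotientGroup.mk' N) c = 1 := (QuotientGroup.eq_one_iff c).mpr hcN
      rw [this, mul_one]
    · rintro ⟨u0, hu0, hux⟩
      have hu0R : u0 ∈ R := hu0.1
      have hmk : (QuotientGroup.mk' N) u0 = (QuotientGroup.mk' N) w := hux
      rw [QuotientGroup.mk'_eq_mk'] at hmk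
      obtain ⟨z, hz, hzw⟩ := hmk
      have hqz : (QuotientGroup.mk' γ) (q z) = 1 := by
        have := hker hz
        rwa [MonoidHom.mem_ker, MonoidHom.comp_apply] at this
      have hqu0 : q u0 = 1 := by
        rw [← MonoidHom.mem_ker, hkq]
        exact hu0R
      rw [← hzw, map_mul, map_mul, hqu0, map_one, one_mul, hqz]
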